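/- For a nonnegative monotone submodular function f with f(∅)=0 on a finite ground set, the standard greedy algorithm that iteratively adds the element with maximum marginal gain, run for k steps, produces a set S_k with f(S_k) ≥ (1 − (1−1/k)^k)·OPT ≥ (1 − 1/e)·OPT, where OPT = max_{|T|≤k} f(T). -/

import Mathlib

lemma sum_marginal {X : Type*} [DecidableEq X] (f : Finset X → ℝ)
    (hmono : ∀ A B : Finset X, A ⊆ B → f A ≤ f B)
    (hsub : ∀ A B : Finset X, A ⊆ B → ∀ x : X, x ∉ B →
        f (insert x A) - f A ≥ f (insert x B) - f B)
    (A T : Finset X) :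
    f (A ∪ T) ≤ f A + ∑ x ∈ T, (f (insert x A) - f A) := by
  classical
  induction T using Finset.induction_on with
  | empty => simp
  | @insert a T ha ih =>
    have hterm : 0 ≤ f (insert a A) - f A := by
      have := hmono A (insert a A) (Finset.subset_insert a A)
      linarith
    rw [Finset.sum_insert ha]
    have hunion : A ∪ insert a T = insert a (A ∪ T) := by
      ext y; simp [Finset.mem_insert, Finset.mem_union, or_assoc]
    rw [hunion]
    by_cases haAT : a ∈ A ∪ T
    · rw [Finset.insert_eq_self.mpr haAT]
      linarith
    · have := hsub A (A ∪ T) Finset.subset_union_left a haAT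
      linarith

/-- Greedy for monotone submodular maximization under a cardinality constraint:
`f (S k) ≥ (1 - (1-1/k)^k) · OPT ≥ (1 - 1/e) · OPT`. -/
theorem greedy_submodular_bound {X : Type*} [DecidableEq X] (f : Finset X → ℝ)
    (k : ℕ) (hk : 1 ≤ k)
    (hnonneg : ∀ S : Finset X, 0 ≤ f S) (hempty : f ∅ = 0)
    (hmono : ∀ A B : Finset X, A ⊆ B → f A ≤ f B)
    (hsub : ∀ A B : Finset X, A ⊆ B → ∀ x : X, x ∉ B →
        f (insert x A) - f A ≥ f (insert x B) - f B)
    (S : ℕ → Finset X) (hS0 : S 0 = ∅)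
    (hgreedy : ∀ i < k, ∃ x : X, x ∉ S i ∧ S (i + 1) = insert x (S i) ∧
        ∀ y : X, f (insert y (S i)) - f (S i) ≤ f (insert x (S i)) - f (S i))
    (OPT : ℝ)
    (hOPT : IsGreatest {y : ℝ | ∃ T : Finset X, T.card ≤ k ∧ f T = y} OPT) :
    f (S k) ≥ (1 - (1 - 1 / (k : ℝ)) ^ k) * OPT ∧
    (1 - (1 - 1 / (k : ℝ)) ^ k) * OPT ≥ (1 - 1 / Real.exp 1) * OPT := by
  obtain ⟨T, hTcard, hTval⟩ := hOPT.1
  set c : ℝ := (k : ℝ) with hc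
  have hc1 : (1 : ℝ) ≤ c := by rw [hc]; exact_mod_cast hk
  have hc0 : (0 : ℝ) < c := by linarith
  have hOPTnn : 0 ≤ OPT := hTval ▸ hnonneg T
  have hq0 : (0 : ℝ) ≤ 1 - 1 / c := by
    have : 1 / c ≤ 1 := by
      rw [div_le_one hc0]; exact hc1
    linarith
  -- key per-step inequality
  have key : ∀ i < k, OPT - f (S (i + 1)) ≤ (1 - 1 / c) * (OPT - f (S i)) := by
    intro i hi
    obtain ⟨x, hx, hSx, hmax⟩ := hgreedy i hi
    have hgain : 0 ≤ f (S (i + 1)) - f (S i) := by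
      rw [hSx]
      have := hmono (S i) (insert x (S i)) (Finset.subset_insert x (S i))
      linarith
    have hsum : f (S i ∪ T) ≤ f (S i) + ∑ y ∈ T, (f (insert y (S i)) - f (S i)) :=
      sum_marginal f hmono hsub (S i) T
    have hsum2 : ∑ y ∈ T, (f (insert y (S i)) - f (S i))
        ≤ (T.card : ℝ) * (f (S (i + 1)) - f (S i)) := by
      calc ∑ y ∈ T, (f (insert y (S i)) - f (S i))
          ≤ ∑ _y ∈ T, (f (S (i + 1)) - f (S i)) := by
            apply Finset.sum_le_sum
            intro y _
            rw [hSx]; exact hmax y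
        _ = (T.card : ℝ) * (f (S (i + 1)) - f (S i)) := by
            rw [Finset.sum_const, nsmul_eq_mul]
    have hcardle : (T.card : ℝ) ≤ c := by rw [hc]; exact_mod_cast hTcard
    have hOT : OPT ≤ f (S i ∪ T) := by
      rw [← hTval]
      exact hmono T (S i ∪ T) Finset.subset_union_right
    have hmain : OPT - f (S i) ≤ c * (f (S (i + 1)) - f (S i)) := by
      have : (T.card : ℝ) * (f (S (i + 1)) - f (S i))
          ≤ c * (f (S (i + 1)) - f (S i)) :=
        mul_le_mul_of_nonneg_right hcardle hgain
      linarith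
    have h3 : c * (OPT - f (S (i + 1))) ≤ (c - 1) * (OPT - f (S i)) := by nlinarith [hmain]
    calc OPT - f (S (i + 1)) = c * (OPT - f (S (i + 1))) / c := by field_simp
      _ ≤ (c - 1) * (OPT - f (S i)) / c := by gcongr
      _ = (1 - 1 / c) * (OPT - f (S i)) := by field_simp
  have bound : ∀ i ≤ k, OPT - f (S i) ≤ (1 - 1 / c) ^ i * OPT := by
    intro i hi
    induction i with
    | zero => simp [hS0, hempty]
    | succ n ih =>
      have hn : n < k := hi
      have h1 := key n hn
      have h2 := ih (le_of_lt hn)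
      calc OPT - f (S (n + 1)) ≤ (1 - 1 / c) * (OPT - f (S n)) := h1
        _ ≤ (1 - 1 / c) * ((1 - 1 / c) ^ n * OPT) :=
            mul_le_mul_of_nonneg_left h2 hq0
        _ = (1 - 1 / c) ^ (n + 1) * OPT := by ring
  have hfirst : f (S k) ≥ (1 - (1 - 1 / c) ^ k) * OPT := by
    have := bound k le_rfl
    nlinarith
  refine ⟨hfirst, ?_⟩
  have hexp : 1 - 1 / c ≤ Real.exp (-(1 / c)) := by
    nlinarith [Real.add_one_le_exp (-(1 / c))]
  have hpow : (1 - 1 / c) ^ k ≤ Real.exp (-(1 / c)) ^ k :=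
    pow_le_pow_left₀ hq0 hexp k
  have hexpk : Real.exp (-(1 / c)) ^ k = Real.exp (-1) := by
    rw [← Real.exp_nat_mul]
    congr 1
    field_simp
    rw [hc]
  have hinv : Real.exp (-1) = 1 / Real.exp 1 := by
    rw [Real.exp_neg]; ring
  have : (1 - 1 / c) ^ k ≤ 1 / Real.exp 1 := by
    rw [← hinv]; exact hexpk ▸ hpow
  have h2 : 1 - 1 / Real.exp 1 ≤ 1 - (1 - 1 / c) ^ k := by linarith
  exact mul_le_mul_of_nonneg_right h2 hOPTnn
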